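/- If w is a finite multiword in a free group F and H is a finitely generated subgroup of F, then the pullback peripheral structure of [w] to H is finite. -/

import Mathlib

/-- The conjugate `g C g⁻¹` of a subgroup `C`. -/
def conjSub {G : Type*} [Group G] (g : G) (C : Subgroup G) : Subgroup G :=
  C.map (MulAut.conj g).toMonoidHom

/-- `C` is a maximal cyclic subgroup of the subgroup `H`. -/
def IsMaxCyclicIn {G : Type*} [Group G] (H C : Subgroup G) : Prop :=
  C ≤ H ∧ (∃ x : G, C = Subgroup.zpowers x) ∧
    ∀ C' : Subgroup G, C' ≤ H → (∃ x : G, C' = Subgroup.zpowers x) → C ≤ C' → C = C'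

/-- The pullback to a subgroup `H ≤ K` of a set `P` of subgroups of `K`: the nontrivial
intersections `H ∩ gCg⁻¹` for `C ∈ P` and `g ∈ K`. -/
def pullbackStruct {G : Type*} [Group G] (K : Subgroup G) (P : Set (Subgroup G))
    (H : Subgroup G) : Set (Subgroup G) :=
  {D | D ≠ ⊥ ∧ ∃ C ∈ P, ∃ g ∈ K, D = H ⊓ conjSub g C}


open FreeGroup List

namespace StallingsAux

variable {α : Type*} [DecidableEq α]

/-- A word is reduced: no adjacent cancelling pair. -/
def IsRedW (L : List (α × Bool)) : Prop :=
  List.Chain' (fun a b => ¬(a.1 = b.1 ∧ a.2 = !b.2)) L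

lemma isRedW_reduce (L : List (α × Bool)) : IsRedW (reduce L) := by
  induction L with
  | nil => simp [IsRedW, List.Chain']
  | cons x t ih =>
    rw [reduce.cons]
    rcases h : reduce t with _ | ⟨hd, tl⟩
    · simp [IsRedW, List.Chain']
    · rw [h] at ih
      show IsRedW (if x.1 = hd.1 ∧ x.2 = !hd.2 then tl else x :: hd :: tl)
      by_cases hc : x.1 = hd.1 ∧ x.2 = !hd.2
      · rw [if_pos hc]; exact ih.tail
      · rw [if_neg hc]; exact List.isChain_cons_cons.mpr ⟨hc, ih⟩

lemma reduce_eq_self_of_isRedW {L : List (α × Bool)} (h : IsRedW L) : reduce L = L := by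
  induction L with
  | nil => rfl
  | cons x t ih =>
    have ht : IsRedW t := h.tail
    rw [reduce.cons, ih ht]
    cases t with
    | nil => rfl
    | cons hd tl =>
      have : ¬(x.1 = hd.1 ∧ x.2 = !hd.2) := (List.isChain_cons_cons.mp h).1
      simp [this]

lemma isRedW_toWord (x : FreeGroup α) : IsRedW (toWord x) := by
  have := isRedW_reduce (toWord x)
  rwa [reduce_toWord] at this

lemma toWord_mk_of_isRedW {L : List (α × Bool)} (h : IsRedW L) :
    toWord (FreeGroup.mk L) = L := by
  rw [toWord_mk, reduce_eq_self_of_isRedW h]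

lemma invRev_append (L₁ L₂ : List (α × Bool)) :
    invRev (L₁ ++ L₂) = invRev L₂ ++ invRev L₁ := by
  simp [invRev]

lemma invRev_singleton (a : α × Bool) : invRev [a] = [(a.1, !a.2)] := by
  simp [invRev]

/-- The cancellation lemma for multiplication of reduced words. -/
lemma mul_toWord_decomp (u v : FreeGroup α) :
    ∃ U C V : List (α × Bool),
      u.toWord = U ++ C ∧ v.toWord = invRev C ++ V ∧ (u * v).toWord = U ++ V := by
  suffices H : ∀ (n : ℕ) (u v : FreeGroup α), u.toWord.length ≤ n →
      ∃ U C V : List (α × Bool),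
        u.toWord = U ++ C ∧ v.toWord = invRev C ++ V ∧ (u * v).toWord = U ++ V from
    H u.toWord.length u v le_rfl
  intro n
  induction n with
  | zero =>
    intro u v hlen
    have hu : u.toWord = [] := List.length_eq_zero_iff.mp (Nat.le_zero.mp hlen)
    have hu1 : u = 1 := toWord_eq_nil_iff.mp hu
    exact ⟨[], [], v.toWord, by simp [hu], by simp [invRev], by simp [hu1]⟩
  | succ n ih =>
    intro u v hlen
    by_cases hu : u.toWord = []
    · have hu1 : u = 1 := toWord_eq_nil_iff.mp hu
      exact ⟨[], [], v.toWord, by simp [hu], by simp [invRev], by simp [hu1]⟩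
    by_cases hv : v.toWord = []
    · have hv1 : v = 1 := toWord_eq_nil_iff.mp hv
      exact ⟨u.toWord, [], [], by simp, by simp [hv, invRev], by simp [hv1]⟩
    set a := u.toWord.getLast hu with ha
    set b := v.toWord.head hv with hb
    by_cases hc : a.1 = b.1 ∧ a.2 = !b.2
    · -- cancellation case
      have hU' : u.toWord.dropLast ++ [a] = u.toWord := List.dropLast_append_getLast hu
      have hV : b :: v.toWord.tail = v.toWord := List.cons_head_tail hv
      set U' := u.toWord.dropLast
      set V'' := v.toWord.tail
      have htu' : (FreeGroup.mk U').toWord = U' :=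
        toWord_mk_of_isRedW ((isRedW_toWord u).prefix ⟨[a], hU'⟩)
      have htv' : (FreeGroup.mk V'').toWord = V'' :=
        toWord_mk_of_isRedW ((isRedW_toWord v).suffix ⟨[b], hV⟩)
      have hbe : b = (a.1, !a.2) := by
        have h2 : b.2 = !a.2 := by rw [hc.2, Bool.not_not]
        exact Prod.ext hc.1.symm h2
      have hab : FreeGroup.mk [a] * FreeGroup.mk [b] = (1 : FreeGroup α) := by
        rw [mul_mk, ← toWord_eq_nil_iff, toWord_mk]
        show (if a.1 = b.1 ∧ a.2 = !b.2 then ([] : List (α × Bool)) else a :: b :: []) = []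
        rw [if_pos hc]
      have key : u * v = FreeGroup.mk U' * FreeGroup.mk V'' := by
        have h1 : u = FreeGroup.mk U' * FreeGroup.mk [a] := by
          rw [mul_mk, hU', mk_toWord]
        have h2 : v = FreeGroup.mk [b] * FreeGroup.mk V'' := by
          rw [mul_mk]
          show v = FreeGroup.mk ([b] ++ V'')
          rw [List.singleton_append, hV, mk_toWord]
        rw [h1, h2, mul_assoc, ← mul_assoc (FreeGroup.mk [a]), hab, one_mul]
      have hlen' : (FreeGroup.mk U').toWord.length ≤ n := by
        rw [htu']
        have : U'.length + 1 = u.toWord.length := by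
          rw [← hU']; simp
        omega
      obtain ⟨U, C', V, e1, e2, e3⟩ := ih (FreeGroup.mk U') (FreeGroup.mk V'') hlen'
      rw [htu'] at e1
      rw [htv'] at e2
      refine ⟨U, C' ++ [a], V, ?_, ?_, ?_⟩
      · rw [← hU', e1, List.append_assoc]
      · rw [invRev_append, invRev_singleton, ← hbe, ← hV, e2]
        simp
      · rw [key, e3]
    · -- no cancellation
      have hred : IsRedW (u.toWord ++ v.toWord) := by
        rw [IsRedW, List.Chain', List.isChain_append]
        refine ⟨isRedW_toWord u, isRedW_toWord v, ?_⟩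
        intro x hx y hy
        rw [List.getLast?_eq_getLast_of_ne_nil hu] at hx
        rw [List.head?_eq_head hv] at hy
        simp only [Option.mem_some_iff] at hx hy
        rwa [ha.trans hx, hb.trans hy] at hc
      refine ⟨u.toWord, [], v.toWord, by simp, by simp [invRev], ?_⟩
      have : u * v = FreeGroup.mk (u.toWord ++ v.toWord) := by
        rw [← mul_mk, mk_toWord, mk_toWord]
      rw [this, toWord_mk_of_isRedW hred]



/-! ### Powers of cyclically reduced words -/

def powList (S : List (α × Bool)) (n : ℕ) : List (α × Bool) :=
  (List.replicate n S).flatten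

@[simp] lemma powList_zero (S : List (α × Bool)) : powList S 0 = [] := rfl

lemma powList_succ (S : List (α × Bool)) (n : ℕ) :
    powList S (n + 1) = S ++ powList S n := by
  simp [powList, List.replicate_succ]

lemma powList_succ' (S : List (α × Bool)) (n : ℕ) :
    powList S (n + 1) = powList S n ++ S := by
  simp [powList, List.replicate_succ']

lemma powList_length (S : List (α × Bool)) (n : ℕ) :
    (powList S n).length = n * S.length := by
  induction n with
  | zero => simp
  | succ n ih => rw [powList_succ, List.length_append, ih]; ring

lemma head?_powList (S : List (α × Bool)) (hS : S ≠ []) {n : ℕ} (hn : n ≠ 0) :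
    (powList S n).head? = S.head? := by
  obtain ⟨m, rfl⟩ := Nat.exists_eq_succ_of_ne_zero hn
  rw [powList_succ, List.head?_append_of_ne_nil _ hS]

lemma getLast?_powList (S : List (α × Bool)) (hS : S ≠ []) {n : ℕ} (hn : n ≠ 0) :
    (powList S n).getLast? = S.getLast? := by
  obtain ⟨m, rfl⟩ := Nat.exists_eq_succ_of_ne_zero hn
  rw [powList_succ']
  rw [List.getLast?_append]
  have : S.getLast? ≠ none := by
    simpa [List.getLast?_eq_none_iff] using hS
  cases h : S.getLast? with
  | none => exact absurd h this
  | some a => simp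

lemma isRedW_powList {S : List (α × Bool)} (hSS : IsRedW (S ++ S)) (n : ℕ) :
    IsRedW (powList S n) := by
  by_cases hS : S = []
  · subst hS
    have : powList ([] : List (α × Bool)) n = [] := by
      induction n with
      | zero => rfl
      | succ n ih => rw [powList_succ, List.nil_append, ih]
    rw [this]; exact List.isChain_nil
  · induction n with
    | zero => exact List.isChain_nil
    | succ n ih =>
      rw [powList_succ, IsRedW, List.Chain', List.isChain_append]
      refine ⟨(List.isChain_append.mp hSS).1, ih, ?_⟩
      intro x hx y hy
      rcases Nat.eq_zero_or_pos n with rfl | hn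
      · simp at hy
      · rw [head?_powList S hS (Nat.pos_iff_ne_zero.mp hn)] at hy
        exact (List.isChain_append.mp hSS).2.2 x hx y hy

lemma toWord_mk_pow {S : List (α × Bool)} (hSS : IsRedW (S ++ S)) (n : ℕ) :
    ((FreeGroup.mk S) ^ n).toWord = powList S n := by
  rw [pow_mk]
  exact toWord_mk_of_isRedW (isRedW_powList hSS n)

lemma take_powList (S : List (α × Bool)) {j N : ℕ} (h : j ≤ N) :
    (powList S N).take (j * S.length) = powList S j := by
  induction j generalizing N with
  | zero => simp
  | succ j ih =>
    obtain ⟨N', rfl⟩ := Nat.exists_eq_succ_of_ne_zero (by omega : N ≠ 0)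
    rw [powList_succ, powList_succ, Nat.succ_mul, Nat.add_comm,
      List.take_length_add_append, ih (by omega)]

/-! ### Cyclic reduction -/

lemma cycred (y : FreeGroup α) (hy : y ≠ 1) :
    ∃ U S : List (α × Bool),
      y.toWord = invRev U ++ S ++ U ∧ S ≠ [] ∧ IsRedW (S ++ S) := by
  suffices H : ∀ (n : ℕ) (y : FreeGroup α), y ≠ 1 → y.toWord.length ≤ n →
      ∃ U S : List (α × Bool),
        y.toWord = invRev U ++ S ++ U ∧ S ≠ [] ∧ IsRedW (S ++ S) from
    H y.toWord.length y hy le_rfl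
  intro n
  induction n with
  | zero =>
    intro y hy hlen
    exact absurd (toWord_eq_nil_iff.mp (List.length_eq_zero_iff.mp (Nat.le_zero.mp hlen))) hy
  | succ n ih =>
    intro y hy hlen
    set W := y.toWord with hWdef
    have hyW : FreeGroup.mk W = y := by rw [hWdef]; exact mk_toWord
    have hne : W ≠ [] := fun h => hy (toWord_eq_nil_iff.mp h)
    by_cases hred : IsRedW (W ++ W)
    · exact ⟨[], W, by simp [invRev], hne, hred⟩
    · -- junction cancellation
      have hW : IsRedW W := isRedW_toWord y
      have hjunc : ¬ ∀ x ∈ W.getLast?, ∀ z ∈ W.head?, ¬(x.1 = z.1 ∧ x.2 = !z.2) := by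
        intro hj
        exact hred (List.isChain_append.mpr ⟨hW, hW, hj⟩)
      push_neg at hjunc
      obtain ⟨a, hx, b, hz, hc⟩ := hjunc
      rw [Option.mem_def] at hx hz
      obtain ⟨W₂, hW₂⟩ := List.getLast?_eq_some_iff.mp hx
      obtain ⟨T, hT⟩ := List.head?_eq_some_iff.mp hz
      cases W₂ with
      | nil =>
        rw [List.nil_append] at hW₂
        rw [hW₂] at hT
        have hba : b = a := by
          have := hT.symm
          simp at this
          exact this.1
        rw [hba] at hc
        simp at hc
      | cons c Mid =>
        have hWdec : W = b :: (Mid ++ [a]) := by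
          have hcb : c = b := by
            rw [hT] at hW₂
            exact (List.cons.injEq _ _ _ _ ▸ hW₂ : _ ∧ _).1.symm
          rw [hW₂, hcb]
          simp
        have hbe : b = (a.1, !a.2) := by
          have h2 : b.2 = !a.2 := by rw [hc.2, Bool.not_not]
          exact Prod.ext hc.1.symm h2
        set y'' := FreeGroup.mk Mid with hy''def
        have hMred : IsRedW Mid := hW.infix ⟨[b], [a], by rw [hWdec]; simp⟩
        have hMid : y''.toWord = Mid := toWord_mk_of_isRedW hMred
        have hinv : (FreeGroup.mk [a])⁻¹ = FreeGroup.mk [b] := by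
          rw [inv_mk, invRev_singleton, ← hbe]
        have hWeq : ([b] ++ Mid) ++ [a] = W := by rw [hWdec]; simp
        have hysplit : y = (FreeGroup.mk [a])⁻¹ * y'' * FreeGroup.mk [a] := by
          rw [hinv, hy''def, mul_mk, mul_mk, hWeq]
          exact hyW.symm
        have hy'' : y'' ≠ 1 := by
          intro h
          rw [h, mul_one, inv_mul_cancel] at hysplit
          exact hy hysplit
        have hlenM : y''.toWord.length ≤ n := by
          rw [hMid]
          have := congrArg List.length hWdec
          simp at this
          omega
        obtain ⟨U', S, m1, m2, m3⟩ := ih y'' hy'' hlenM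
        rw [hMid] at m1
        refine ⟨U' ++ [a], S, ?_, m2, m3⟩
        rw [invRev_append, invRev_singleton, ← hbe, hWdec, m1]
        simp


/-! ### Norm grows under powers -/

lemma toWord_pow_decomp {y : FreeGroup α} {U S : List (α × Bool)}
    (hW : y.toWord = invRev U ++ S ++ U) (hSne : S ≠ []) (hSS : IsRedW (S ++ S))
    (m : ℕ) (hm : m ≠ 0) :
    (y ^ m).toWord = invRev U ++ powList S m ++ U := by
  have hyfact : y = (FreeGroup.mk U)⁻¹ * FreeGroup.mk S * FreeGroup.mk U := by
    rw [inv_mk, mul_mk, mul_mk, ← mk_toWord (x := y), hW]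
  have hpow : y ^ m = (FreeGroup.mk U)⁻¹ * (FreeGroup.mk S) ^ m * FreeGroup.mk U := by
    have hcp := conj_pow (i := m) (a := (FreeGroup.mk U)⁻¹) (b := FreeGroup.mk S)
    rw [inv_inv] at hcp
    rw [hyfact]
    exact hcp
  -- junction data from the reducedness of toWord y
  have hWred : IsRedW ((invRev U ++ S) ++ U) := by
    have := isRedW_toWord y
    rwa [hW] at this
  obtain ⟨h1, h2, h3⟩ := List.isChain_append.mp hWred
  obtain ⟨h11, h12, h13⟩ := List.isChain_append.mp h1
  obtain ⟨aS, haS⟩ : ∃ p, S.getLast? = some p := by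
    cases h : S.getLast? with
    | none => exact absurd (List.getLast?_eq_none_iff.mp h) hSne
    | some p => exact ⟨p, rfl⟩
  obtain ⟨bS, hbS⟩ : ∃ p, S.head? = some p := by
    cases h : S.head? with
    | none => exact absurd (List.head?_eq_none_iff.mp h) hSne
    | some p => exact ⟨p, rfl⟩
  have hred : IsRedW ((invRev U ++ powList S m) ++ U) := by
    rw [IsRedW, List.Chain', List.isChain_append]
    refine ⟨?_, h2, ?_⟩
    · rw [List.isChain_append]
      refine ⟨h11, isRedW_powList hSS m, ?_⟩
      intro x hx z hz
      rw [head?_powList S hSne hm, hbS] at hz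
      exact h13 x hx z (by rw [hbS]; exact hz)
    · intro x hx z hz
      rw [List.getLast?_append, getLast?_powList S hSne hm, haS] at hx
      refine h3 x ?_ z hz
      rw [List.getLast?_append, haS]
      exact hx
  rw [hpow, inv_mk, pow_mk, mul_mk, mul_mk]
  exact toWord_mk_of_isRedW hred

lemma length_le_pow {y : FreeGroup α} (hy : y ≠ 1) (m : ℕ) (hm : m ≠ 0) :
    y.toWord.length ≤ (y ^ m).toWord.length := by
  obtain ⟨U, S, hW, hSne, hSS⟩ := cycred y hy
  have h1 := congrArg List.length hW
  have h2 := congrArg List.length (toWord_pow_decomp hW hSne hSS m hm)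
  simp only [List.length_append, invRev_length, powList_length] at h1 h2
  have h3 : S.length ≤ m * S.length :=
    Nat.le_mul_of_pos_left _ (Nat.pos_of_ne_zero hm)
  omega

lemma length_le_zpow {y : FreeGroup α} (hy : y ≠ 1) (k : ℤ) (hk : k ≠ 0) :
    y.toWord.length ≤ (y ^ k).toWord.length := by
  rcases lt_or_gt_of_ne hk with hneg | hpos
  · have heq : y ^ k = (y ^ ((-k).toNat))⁻¹ := by
      rw [← zpow_natCast, Int.toNat_of_nonneg (by omega), ← zpow_neg, neg_neg]
    rw [heq, toWord_inv, invRev_length]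
    exact length_le_pow hy _ (by omega)
  · have heq : y ^ k = y ^ (k.toNat) := by
      rw [← zpow_natCast, Int.toNat_of_nonneg (by omega)]
    rw [heq]
    exact length_le_pow hy _ (by omega)

/-! ### The prefix-coset property of finitely generated subgroups -/

lemma prefix_coset (Sg : Finset (FreeGroup α)) (H : Subgroup (FreeGroup α))
    (hgen : Subgroup.closure (Sg : Set (FreeGroup α)) = H) :
    ∃ E : Set (FreeGroup α), E.Finite ∧
      ∀ h ∈ H, ∀ p, p <+: h.toWord → ∃ e ∈ E, FreeGroup.mk p * e⁻¹ ∈ H := by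
  classical
  refine ⟨insert 1 (⋃ a ∈ (Sg : Set (FreeGroup α)),
      (fun p => FreeGroup.mk p) '' {p | p <+: a.toWord}), ?_, ?_⟩
  · refine Set.Finite.insert _ (Set.Finite.biUnion (Sg.finite_toSet) ?_)
    intro a _
    refine Set.Finite.image _ ?_
    have : {p | p <+: a.toWord} = {p | p ∈ a.toWord.inits} := by
      ext p; simp [List.mem_inits]
    rw [this]
    exact a.toWord.inits.finite_toSet
  · intro h hh
    have hh' : h ∈ Subgroup.closure (Sg : Set (FreeGroup α)) := by rwa [hgen]
    clear hh
    induction hh' using Subgroup.closure_induction with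
    | mem x hx =>
      intro p hp
      refine ⟨FreeGroup.mk p, ?_, by rw [mul_inv_cancel]; exact H.one_mem⟩
      exact Set.mem_insert_iff.mpr (Or.inr (Set.mem_biUnion hx ⟨p, hp, rfl⟩))
    | one =>
      intro p hp
      rw [toWord_one, List.prefix_nil] at hp
      subst hp
      refine ⟨1, Set.mem_insert _ _, ?_⟩
      rw [← one_eq_mk, inv_one, mul_one]
      exact H.one_mem
    | mul x y hx hy px py =>
      intro p hp
      have hxH : x ∈ H := by rwa [hgen] at hx
      obtain ⟨U, C, V, e1, e2, e3⟩ := mul_toWord_decomp x y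
      rw [e3] at hp
      rcases le_or_gt p.length U.length with hle | hlt
      · have hpU : p <+: U := List.prefix_of_prefix_length_le hp ⟨V, rfl⟩ hle
        exact px p (hpU.trans (e1 ▸ ⟨C, rfl⟩))
      · have hUp : U <+: p :=
          List.prefix_of_prefix_length_le ⟨V, rfl⟩ hp (Nat.le_of_lt hlt)
        obtain ⟨b, rfl⟩ := hUp
        have hbV : b <+: V := (List.prefix_append_right_inj U).mp hp
        have hq : invRev C ++ b <+: y.toWord := by
          rw [e2]; exact (List.prefix_append_right_inj _).mpr hbV
        obtain ⟨e, he, hqe⟩ := py (invRev C ++ b) hq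
        refine ⟨e, he, ?_⟩
        have hx' : x = FreeGroup.mk U * FreeGroup.mk C := by
          rw [mul_mk, ← e1, mk_toWord]
        have hkey : FreeGroup.mk (U ++ b) * e⁻¹ =
            x * (FreeGroup.mk (invRev C ++ b) * e⁻¹) := by
          rw [hx', ← mul_mk, ← mul_mk, ← inv_mk]
          group
        rw [hkey]
        exact H.mul_mem hxH hqe
    | inv x hx px =>
      intro p hp
      have hxH : x ∈ H := by rwa [hgen] at hx
      rw [toWord_inv] at hp
      obtain ⟨t, ht⟩ := hp
      have hW : x.toWord = invRev t ++ invRev p := by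
        have h2 := congrArg invRev ht
        rw [invRev_append, invRev_invRev] at h2
        exact h2.symm
      obtain ⟨e, he, hae⟩ := px (invRev t) ⟨invRev p, hW.symm⟩
      refine ⟨e, he, ?_⟩
      have hxe : x = FreeGroup.mk (invRev t) * (FreeGroup.mk p)⁻¹ := by
        rw [inv_mk, mul_mk, ← hW, mk_toWord]
      have hkey : FreeGroup.mk p * e⁻¹ = x⁻¹ * (FreeGroup.mk (invRev t) * e⁻¹) := by
        rw [hxe]; group
      rw [hkey]
      exact H.mul_mem (H.inv_mem hxH) hae


/-! ### The main double-coset lemma for cyclically reduced words -/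

lemma main_cyc {H : Subgroup (FreeGroup α)} {E : Set (FreeGroup α)}
    (hEp : ∀ h ∈ H, ∀ p, p <+: h.toWord → ∃ e ∈ E, FreeGroup.mk p * e⁻¹ ∈ H)
    {S : List (α × Bool)} (hSne : S ≠ []) (hSS : IsRedW (S ++ S))
    (c : FreeGroup α) (k : ℕ) (hk : k ≠ 0)
    (hmem : c * (FreeGroup.mk S) ^ k * c⁻¹ ∈ H) :
    ∃ e ∈ E, ∃ h ∈ H, ∃ j : ℤ, c = h * e * (FreeGroup.mk S) ^ j := by
  classical
  set s := FreeGroup.mk S with hs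
  have hl1 : 1 ≤ S.length := List.length_pos_iff.mpr hSne
  set n := c.toWord.length with hn
  set M := 2 * n + 2 with hM
  set N := k * M with hN
  have hNM : M ≤ N := Nat.le_mul_of_pos_left M (Nat.pos_of_ne_zero hk)
  have hsN : c * s ^ N * c⁻¹ ∈ H := by
    have hconj : (c * s ^ k * c⁻¹) ^ M = c * s ^ N * c⁻¹ := by
      rw [conj_pow, ← pow_mul, hN]
    rw [← hconj]
    exact H.pow_mem hmem M
  have hWsN : (s ^ N).toWord = powList S N := toWord_mk_pow hSS N
  obtain ⟨G₁, C, ρ, e1, e2, e3⟩ := mul_toWord_decomp c (s ^ N)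
  obtain ⟨A₁, C₂, D₁, f1, f2, f3⟩ := mul_toWord_decomp (c * s ^ N) c⁻¹
  have lc : G₁.length + C.length = n := by
    rw [hn, e1, List.length_append]
  have lC2 : C₂.length + D₁.length = n := by
    have h := congrArg List.length f2
    rw [toWord_inv, invRev_length, ← hn] at h
    simp only [List.length_append, invRev_length] at h
    omega
  have hPL : invRev C ++ ρ = powList S N := by rw [← e2]; exact hWsN
  have lρ : C.length + ρ.length = N * S.length := by
    have h := congrArg List.length hPL
    simpa [invRev_length, powList_length] using h
  have lA : A₁.length + C₂.length = G₁.length + ρ.length := by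
    have h := congrArg List.length (f1.symm.trans e3)
    simpa using h
  set j := n + 1 with hj
  have h2j : 2 * j ≤ N := by omega
  have hb2 : (2 * j) * S.length ≤ N * S.length := Nat.mul_le_mul_right _ h2j
  have hb3 : (2 * j) * S.length = j * S.length + j * S.length := by ring
  have hb4 : j ≤ j * S.length := Nat.le_mul_of_pos_right j hl1
  have hCle : C.length ≤ j * S.length := by omega
  set m := j * S.length - C.length with hm
  have hjl : C.length + m = j * S.length := by omega
  have harith : m + n ≤ ρ.length := by omega
  set ρ' := ρ.take m with hρ'
  have lρ' : ρ'.length = m := by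
    rw [hρ', List.length_take]
    omega
  set p := G₁ ++ ρ' with hp
  have hplen : p.length = G₁.length + m := by
    rw [hp, List.length_append, lρ']
  have hppre : p <+: (c * s ^ N).toWord := by
    rw [e3, hp]
    exact (List.prefix_append_right_inj G₁).mpr (List.take_prefix m ρ)
  have hpA : p <+: A₁ :=
    List.prefix_of_prefix_length_le hppre ⟨C₂, f1.symm⟩ (by omega)
  have hph : p <+: (c * s ^ N * c⁻¹).toWord := by
    rw [f3]
    exact hpA.trans ⟨D₁, rfl⟩
  obtain ⟨e, he, hpe⟩ := hEp _ hsN p hph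
  have hjN : j ≤ N := by omega
  have htake : powList S j = invRev C ++ ρ' := by
    have h1 : (powList S N).take (j * S.length) = powList S j := take_powList S hjN
    rw [← hPL] at h1
    have h2 : j * S.length = (invRev C).length + m := by
      rw [invRev_length]; omega
    rw [h2, List.take_length_add_append] at h1
    exact h1.symm
  have hsj : s ^ j = FreeGroup.mk (invRev C) * FreeGroup.mk ρ' := by
    have h1 := congrArg FreeGroup.mk (toWord_mk_pow hSS j)
    rw [mk_toWord] at h1
    rw [h1, htake, mul_mk]
  have hceq : c = FreeGroup.mk G₁ * FreeGroup.mk C := by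
    rw [mul_mk, ← e1, mk_toWord]
  have hkey : FreeGroup.mk p = c * s ^ j := by
    rw [hp, ← mul_mk, hceq, hsj, ← inv_mk]
    group
  rw [hkey] at hpe
  refine ⟨e, he, c * s ^ j * e⁻¹, hpe, -(j : ℤ), ?_⟩
  rw [zpow_neg, zpow_natCast]
  group


/-! ### The main lemma: bounded double cosets -/

lemma main {H : Subgroup (FreeGroup α)} (hH : H.FG) (y : FreeGroup α) (hy : y ≠ 1) :
    ∃ G₀ : Set (FreeGroup α), G₀.Finite ∧ ∀ g : FreeGroup α,
      H ⊓ Subgroup.zpowers (g * y * g⁻¹) ≠ ⊥ →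
      ∃ g₀ ∈ G₀, ∃ h ∈ H, ∃ j : ℤ, g = h * g₀ * y ^ j := by
  classical
  obtain ⟨Sg, hgen⟩ := hH
  obtain ⟨E, hEfin, hEp⟩ := prefix_coset Sg H hgen
  obtain ⟨U, S, hW, hSne, hSS⟩ := cycred y hy
  set u := FreeGroup.mk U with hu
  set s := FreeGroup.mk S with hs
  have hyfact : y = u⁻¹ * s * u := by
    rw [hu, hs, inv_mk, mul_mk, mul_mk, ← mk_toWord (x := y), hW]
  refine ⟨(fun e => e * u) '' E, hEfin.image _, ?_⟩
  intro g hne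
  obtain ⟨z, hzmem, hz1⟩ : ∃ z ∈ H ⊓ Subgroup.zpowers (g * y * g⁻¹), z ≠ 1 :=
    (Subgroup.bot_or_exists_ne_one _).resolve_left hne
  obtain ⟨hzH, hzp⟩ := Subgroup.mem_inf.mp hzmem
  obtain ⟨k, hk⟩ := Subgroup.mem_zpowers_iff.mp hzp
  have hk0 : k ≠ 0 := by
    rintro rfl
    rw [zpow_zero] at hk
    exact hz1 hk.symm
  have hcpz : (u⁻¹ * s * u) ^ k = u⁻¹ * s ^ k * u := by
    have h := conj_zpow (i := k) (a := u⁻¹) (b := s)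
    rwa [inv_inv] at h
  have hz2 : (g * u⁻¹) * s ^ k * (g * u⁻¹)⁻¹ ∈ H := by
    have heq : (g * u⁻¹) * s ^ k * (g * u⁻¹)⁻¹ = (g * y * g⁻¹) ^ k := by
      rw [conj_zpow, hyfact, hcpz]
      group
    rw [heq, hk]
    exact hzH
  have hmem : ∃ k₀ : ℕ, k₀ ≠ 0 ∧ (g * u⁻¹) * s ^ k₀ * (g * u⁻¹)⁻¹ ∈ H := by
    rcases lt_or_gt_of_ne hk0 with hneg | hpos
    · refine ⟨(-k).toNat, by omega, ?_⟩
      have heq : (g * u⁻¹) * s ^ (((-k).toNat : ℕ)) * (g * u⁻¹)⁻¹ =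
          ((g * u⁻¹) * s ^ k * (g * u⁻¹)⁻¹)⁻¹ := by
        rw [← zpow_natCast, Int.toNat_of_nonneg (by omega)]
        group
      rw [heq]
      exact H.inv_mem hz2
    · refine ⟨k.toNat, by omega, ?_⟩
      have heq : (g * u⁻¹) * s ^ ((k.toNat : ℕ)) * (g * u⁻¹)⁻¹ =
          (g * u⁻¹) * s ^ k * (g * u⁻¹)⁻¹ := by
        rw [← zpow_natCast, Int.toNat_of_nonneg (by omega)]
      rw [heq]
      exact hz2
  obtain ⟨k₀, hk₀, hmem'⟩ := hmem
  obtain ⟨e, he, h, hh, jz, hceq⟩ := main_cyc hEp hSne hSS (g * u⁻¹) k₀ hk₀ hmem'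
  refine ⟨e * u, ⟨e, he, rfl⟩, h, hh, jz, ?_⟩
  have hyz : y ^ jz = u⁻¹ * s ^ jz * u := by
    have hcp := conj_zpow (i := jz) (a := u⁻¹) (b := s)
    rw [inv_inv] at hcp
    rw [hyfact]
    exact hcp
  calc g = (g * u⁻¹) * u := by group
    _ = (h * e * s ^ jz) * u := by rw [hceq]
    _ = h * (e * u) * (u⁻¹ * s ^ jz * u) := by group
    _ = h * (e * u) * y ^ jz := by rw [← hyz]


end StallingsAux

/-! ### Lemmas about `conjSub` and final assembly -/

section ConjSub

variable {G : Type*} [Group G]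

lemma conjSub_zpowers (g y : G) :
    conjSub g (Subgroup.zpowers y) = Subgroup.zpowers (g * y * g⁻¹) := by
  unfold conjSub
  rw [MonoidHom.map_zpowers]
  rfl

lemma conjSub_conjSub (a b : G) (C : Subgroup G) :
    conjSub a (conjSub b C) = conjSub (a * b) C := by
  unfold conjSub
  rw [Subgroup.map_map]
  congr 1
  ext x
  simp [mul_assoc]

lemma conjSub_one (C : Subgroup G) : conjSub 1 C = C := by
  unfold conjSub
  ext z
  simp [Subgroup.mem_map]

lemma conjSub_self_of_mem {H : Subgroup G} {h : G} (hh : h ∈ H) :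
    conjSub h H = H := by
  unfold conjSub
  ext z
  simp only [Subgroup.mem_map, MulEquiv.coe_toMonoidHom, MulAut.conj_apply]
  constructor
  · rintro ⟨w, hw, rfl⟩
    exact H.mul_mem (H.mul_mem hh hw) (H.inv_mem hh)
  · intro hz
    refine ⟨h⁻¹ * z * h, ?_, by group⟩
    exact H.mul_mem (H.mul_mem (H.inv_mem hh) hz) hh

lemma conjSub_inf (g : G) (A B : Subgroup G) :
    conjSub g (A ⊓ B) = conjSub g A ⊓ conjSub g B :=
  Subgroup.map_inf A B _ (MulAut.conj g).injective

end ConjSub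

/-- If `w` is a finite multiword in a finitely generated free group `F` and `H` is a
finitely generated subgroup of `F`, then the pullback peripheral structure of `[w]`
(the set of maximal cyclic subgroups containing elements of `w`) to `H` consists of
finitely many `H`-conjugacy classes. -/
theorem stmt_4 {α : Type*} [Finite α] (w : Finset (FreeGroup α))
    (hw : (1 : FreeGroup α) ∉ w)
    (H : Subgroup (FreeGroup α)) (hH : H.FG) :
    ∃ T : Finset (Subgroup (FreeGroup α)),
      ∀ D ∈ pullbackStruct ⊤ {C | IsMaxCyclicIn ⊤ C ∧ ∃ x ∈ w, x ∈ C} H,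
        ∃ D' ∈ T, ∃ h ∈ H, conjSub h D = D' := by
  classical
  set L := w.sup (fun x => x.toWord.length) with hL
  set B := {y : FreeGroup α | y ≠ 1 ∧ y.toWord.length ≤ L} with hB
  have hBfin : B.Finite := by
    have hsub : B ⊆ FreeGroup.toWord ⁻¹' {l : List (α × Bool) | l.length ≤ L} := by
      intro y hy
      exact hy.2
    refine Set.Finite.subset (Set.Finite.preimage ?_ (List.finite_length_le _ L)) hsub
    exact Set.injOn_of_injective FreeGroup.toWord_injective
  have hmain : ∀ y : FreeGroup α, ∃ G₀ : Set (FreeGroup α), G₀.Finite ∧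
      (y ≠ 1 → ∀ g : FreeGroup α,
        H ⊓ Subgroup.zpowers (g * y * g⁻¹) ≠ ⊥ →
        ∃ g₀ ∈ G₀, ∃ h ∈ H, ∃ j : ℤ, g = h * g₀ * y ^ j) := by
    intro y
    by_cases hy : y = 1
    · exact ⟨∅, Set.finite_empty, fun h => absurd hy h⟩
    · obtain ⟨G₀, hfin, hprop⟩ := StallingsAux.main hH y hy
      exact ⟨G₀, hfin, fun _ => hprop⟩
  choose G₀ hG₀fin hG₀ using hmain
  have hTfin : (⋃ y ∈ B, (fun g₀ => H ⊓ conjSub g₀ (Subgroup.zpowers y)) '' (G₀ y)).Finite :=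
    Set.Finite.biUnion hBfin (fun y _ => (hG₀fin y).image _)
  refine ⟨hTfin.toFinset, ?_⟩
  rintro D ⟨hDbot, C, ⟨hCmax, x, hxw, hxC⟩, g, -, hD⟩
  obtain ⟨-, ⟨y₀, rfl⟩, -⟩ := hCmax
  have hx1 : x ≠ 1 := fun h => hw (h ▸ hxw)
  obtain ⟨kx, hkx⟩ := Subgroup.mem_zpowers_iff.mp hxC
  have hy₀ : y₀ ≠ 1 := by
    rintro rfl
    rw [one_zpow] at hkx
    exact hx1 hkx.symm
  have hkx0 : kx ≠ 0 := by
    rintro rfl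
    rw [zpow_zero] at hkx
    exact hx1 hkx.symm
  have hy₀B : y₀ ∈ B := by
    refine ⟨hy₀, ?_⟩
    have h1 := StallingsAux.length_le_zpow hy₀ kx hkx0
    rw [hkx] at h1
    refine h1.trans ?_
    rw [hL]
    exact Finset.le_sup (f := fun x => x.toWord.length) hxw
  have hDne : H ⊓ Subgroup.zpowers (g * y₀ * g⁻¹) ≠ ⊥ := by
    rw [← conjSub_zpowers, ← hD]
    exact hDbot
  obtain ⟨g₀, hg₀, h, hh, jz, hgeq⟩ := hG₀ y₀ hy₀ g hDne
  refine ⟨H ⊓ conjSub g₀ (Subgroup.zpowers y₀), ?_, h⁻¹, H.inv_mem hh, ?_⟩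
  · rw [Set.Finite.mem_toFinset]
    exact Set.mem_biUnion hy₀B ⟨g₀, hg₀, rfl⟩
  · have hconj : g * y₀ * g⁻¹ = h * (g₀ * y₀ * g₀⁻¹) * h⁻¹ := by
      rw [hgeq]
      group
    have hDeq : D = conjSub h (H ⊓ conjSub g₀ (Subgroup.zpowers y₀)) := by
      rw [hD, conjSub_zpowers g, hconj, conjSub_inf, conjSub_self_of_mem hh,
        conjSub_zpowers g₀, conjSub_zpowers h]
    rw [hDeq, conjSub_conjSub, inv_mul_cancel, conjSub_one]
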